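/- Let G_n be the group with presentation ⟨p_1,…,p_n, y_1,…,y_{n-1} | [y_i,y_j]=1 for all i,j; [p_i,y_j]=1 for j ≥ i; [p_i, y_j p_j p_{j+1}⁻¹]=1 for j < i⟩ (with conventions y_n = 1, p_{n+1} = 1). Then the subgroup N = ⟨p_1,…,p_n⟩ is normal and free of rank n, the subgroup Q = ⟨y_1,…,y_{n-1}⟩ is free abelian of rank n−1, and G_n = N ⋊ Q, where the conjugation action is given by p_i^{y_j} = p_i^{p_{j+1} p_j⁻¹} for j < i and p_i^{y_j} = p_i for j ≥ i. -/

import Mathlib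

/-! The group `G_n` of the paper (here with `n = m + 1 ≥ 1`):
`G_n = ⟨p_1,…,p_n, y_1,…,y_{n-1} | [y_i,y_j] = 1; [p_i,y_j] = 1 (j ≥ i);
[p_i, y_j p_j p_{j+1}⁻¹] = 1 (j < i)⟩`.
Generators are 0-indexed: `p` over `Fin (m+1)` and `y` over `Fin m`. -/

/-- Free-group letter for `p_{i+1}` (0-indexed `i`). -/
def gnFreeP (m : ℕ) (i : Fin (m + 1)) : FreeGroup (Fin (m + 1) ⊕ Fin m) :=
  FreeGroup.of (Sum.inl i)

/-- Free-group letter for `y_{j+1}` (0-indexed `j`). -/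
def gnFreeY (m : ℕ) (j : Fin m) : FreeGroup (Fin (m + 1) ⊕ Fin m) :=
  FreeGroup.of (Sum.inr j)

open scoped commutatorElement

/-- The defining relators of `G_{m+1}`. -/
def gnRels (m : ℕ) : Set (FreeGroup (Fin (m + 1) ⊕ Fin m)) :=
  { r | (∃ i j : Fin m, r = ⁅gnFreeY m i, gnFreeY m j⁆) ∨
        (∃ (i : Fin (m + 1)) (j : Fin m), (i : ℕ) ≤ (j : ℕ) ∧
          r = ⁅gnFreeP m i, gnFreeY m j⁆) ∨
        (∃ (i : Fin (m + 1)) (j : Fin m), (j : ℕ) < (i : ℕ) ∧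
          r = ⁅gnFreeP m i,
                gnFreeY m j * gnFreeP m j.castSucc * (gnFreeP m j.succ)⁻¹⁆) }

/-- The group `G_{m+1}`. -/
abbrev GnGroup (m : ℕ) : Type := PresentedGroup (gnRels m)

/-- The generator `p_{i+1}` (0-indexed `i`) of `G_{m+1}`. -/
def gnP (m : ℕ) (i : Fin (m + 1)) : GnGroup m := PresentedGroup.of (Sum.inl i)

/-- The generator `y_{j+1}` (0-indexed `j`) of `G_{m+1}`. -/
def gnY (m : ℕ) (j : Fin m) : GnGroup m := PresentedGroup.of (Sum.inr j)

/-- The generators `y_i p_i p_{i+1}⁻¹ y_i` (`1 ≤ i ≤ n-1`) and `p_n` (using the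
conventions `y_n = 1`, `p_{n+1} = 1`) of the subgroup `H_n ⊆ G_n`. -/
def gnH (m : ℕ) (i : Fin (m + 1)) : GnGroup m :=
  if h : (i : ℕ) < m then
    gnY m ⟨i, h⟩ * gnP m (Fin.castSucc ⟨i, h⟩) * (gnP m (Fin.succ ⟨i, h⟩))⁻¹ *
      gnY m ⟨i, h⟩
  else gnP m i

open FreeGroup

abbrev GnF (m : ℕ) := FreeGroup (Fin (m + 1))

/-- `d_j = p_j⁻¹ p_{j+1}` in the free group. -/
def gnD (m : ℕ) (j : Fin m) : GnF m := (FreeGroup.of j.castSucc)⁻¹ * FreeGroup.of j.succ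

/-- `c_j = p_{j+1} p_j⁻¹` in the free group. -/
def gnC (m : ℕ) (j : Fin m) : GnF m := FreeGroup.of j.succ * (FreeGroup.of j.castSucc)⁻¹

def gnA (m : ℕ) (j : Fin m) : GnF m →* GnF m :=
  FreeGroup.lift fun i =>
    if (j : ℕ) < (i : ℕ) then gnD m j * FreeGroup.of i * (gnD m j)⁻¹ else FreeGroup.of i

def gnB (m : ℕ) (j : Fin m) : GnF m →* GnF m :=
  FreeGroup.lift fun i =>
    if (j : ℕ) < (i : ℕ) then (gnC m j)⁻¹ * FreeGroup.of i * gnC m j else FreeGroup.of i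

theorem gnA_of (m : ℕ) (j : Fin m) (i : Fin (m + 1)) :
    gnA m j (FreeGroup.of i) =
      if (j : ℕ) < (i : ℕ) then gnD m j * FreeGroup.of i * (gnD m j)⁻¹ else FreeGroup.of i :=
  FreeGroup.lift_apply_of

theorem gnB_of (m : ℕ) (j : Fin m) (i : Fin (m + 1)) :
    gnB m j (FreeGroup.of i) =
      if (j : ℕ) < (i : ℕ) then (gnC m j)⁻¹ * FreeGroup.of i * gnC m j else FreeGroup.of i :=
  FreeGroup.lift_apply_of

theorem gnA_of_le (m : ℕ) (j : Fin m) (i : Fin (m + 1)) (h : (i : ℕ) ≤ (j : ℕ)) :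
    gnA m j (FreeGroup.of i) = FreeGroup.of i := by rw [gnA_of, if_neg (by omega)]

theorem gnA_of_lt (m : ℕ) (j : Fin m) (i : Fin (m + 1)) (h : (j : ℕ) < (i : ℕ)) :
    gnA m j (FreeGroup.of i) = gnD m j * FreeGroup.of i * (gnD m j)⁻¹ := by
  rw [gnA_of, if_pos h]

theorem gnB_of_le (m : ℕ) (j : Fin m) (i : Fin (m + 1)) (h : (i : ℕ) ≤ (j : ℕ)) :
    gnB m j (FreeGroup.of i) = FreeGroup.of i := by rw [gnB_of, if_neg (by omega)]

theorem gnB_of_lt (m : ℕ) (j : Fin m) (i : Fin (m + 1)) (h : (j : ℕ) < (i : ℕ)) :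
    gnB m j (FreeGroup.of i) = (gnC m j)⁻¹ * FreeGroup.of i * gnC m j := by
  rw [gnB_of, if_pos h]

theorem gnA_castSucc (m : ℕ) (j : Fin m) :
    gnA m j (FreeGroup.of j.castSucc) = FreeGroup.of j.castSucc :=
  gnA_of_le m j _ (by simp)

theorem gnA_succ (m : ℕ) (j : Fin m) :
    gnA m j (FreeGroup.of j.succ) = gnD m j * FreeGroup.of j.succ * (gnD m j)⁻¹ :=
  gnA_of_lt m j _ (by simp)

theorem gnB_castSucc (m : ℕ) (j : Fin m) :
    gnB m j (FreeGroup.of j.castSucc) = FreeGroup.of j.castSucc :=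
  gnB_of_le m j _ (by simp)

theorem gnB_succ (m : ℕ) (j : Fin m) :
    gnB m j (FreeGroup.of j.succ) = (gnC m j)⁻¹ * FreeGroup.of j.succ * gnC m j :=
  gnB_of_lt m j _ (by simp)

theorem gnA_gnC (m : ℕ) (j : Fin m) : gnA m j (gnC m j) = gnD m j := by
  rw [gnC, MonoidHom.map_mul, MonoidHom.map_inv, gnA_castSucc, gnA_succ, gnD]
  group

theorem gnB_gnD (m : ℕ) (j : Fin m) : gnB m j (gnD m j) = gnC m j := by
  rw [gnD, MonoidHom.map_mul, MonoidHom.map_inv, gnB_castSucc, gnB_succ, gnC]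
  group

theorem gnA_comp_gnB (m : ℕ) (j : Fin m) : (gnA m j).comp (gnB m j) = MonoidHom.id _ := by
  apply FreeGroup.ext_hom
  intro i
  simp only [MonoidHom.comp_apply, MonoidHom.id_apply]
  by_cases h : (j : ℕ) < (i : ℕ)
  · rw [gnB_of_lt m j i h, MonoidHom.map_mul, MonoidHom.map_mul, MonoidHom.map_inv, gnA_gnC, gnA_of_lt m j i h]
    group
  · rw [gnB_of_le m j i (by omega), gnA_of_le m j i (by omega)]

theorem gnB_comp_gnA (m : ℕ) (j : Fin m) : (gnB m j).comp (gnA m j) = MonoidHom.id _ := by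
  apply FreeGroup.ext_hom
  intro i
  simp only [MonoidHom.comp_apply, MonoidHom.id_apply]
  by_cases h : (j : ℕ) < (i : ℕ)
  · rw [gnA_of_lt m j i h, MonoidHom.map_mul, MonoidHom.map_mul, MonoidHom.map_inv, gnB_gnD, gnB_of_lt m j i h, gnC]
    group
  · rw [gnA_of_le m j i (by omega), gnB_of_le m j i (by omega)]

/-- The automorphism `p_i ↦ d_j p_i d_j⁻¹` (for `i > j`) of the free group. -/
def gnAut (m : ℕ) (j : Fin m) : MulAut (GnF m) :=
  MonoidHom.toMulEquiv (gnA m j) (gnB m j) (gnB_comp_gnA m j) (gnA_comp_gnB m j)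

theorem gnAut_apply (m : ℕ) (j : Fin m) (x : GnF m) : gnAut m j x = gnA m j x := rfl
theorem gnAut_inv_apply (m : ℕ) (j : Fin m) (x : GnF m) : (gnAut m j)⁻¹ x = gnB m j x := rfl

theorem gnA_gnD_lt (m : ℕ) (j k : Fin m) (h : (j : ℕ) < (k : ℕ)) :
    gnA m j (gnD m k) = gnD m j * gnD m k * (gnD m j)⁻¹ := by
  rw [gnD, MonoidHom.map_mul, MonoidHom.map_inv,
    gnA_of_lt m j k.castSucc (by simpa using h), gnA_of_lt m j k.succ (by simp; omega)]
  group

theorem gnA_gnD_gt (m : ℕ) (j k : Fin m) (h : (k : ℕ) < (j : ℕ)) :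
    gnA m j (gnD m k) = gnD m k := by
  rw [gnD, MonoidHom.map_mul, MonoidHom.map_inv,
    gnA_of_le m j k.castSucc (by simp; omega), gnA_of_le m j k.succ (by simp; omega)]

theorem gnA_comp_comm (m : ℕ) (j k : Fin m) (h : (j : ℕ) < (k : ℕ)) :
    (gnA m j).comp (gnA m k) = (gnA m k).comp (gnA m j) := by
  apply FreeGroup.ext_hom
  intro i
  simp only [MonoidHom.comp_apply]
  by_cases hk : (k : ℕ) < (i : ℕ)
  · have hj : (j : ℕ) < (i : ℕ) := by omega
    rw [gnA_of_lt m k i hk, gnA_of_lt m j i hj]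
    simp only [MonoidHom.map_mul, MonoidHom.map_inv]
    rw [gnA_gnD_lt m j k h, gnA_gnD_gt m k j h, gnA_of_lt m j i hj, gnA_of_lt m k i hk]
    group
  · rw [gnA_of_le m k i (by omega)]
    by_cases hj : (j : ℕ) < (i : ℕ)
    · rw [gnA_of_lt m j i hj]
      simp only [MonoidHom.map_mul, MonoidHom.map_inv]
      rw [gnA_gnD_gt m k j h, gnA_of_le m k i (by omega)]
    · rw [gnA_of_le m j i (by omega), gnA_of_le m k i (by omega)]

theorem gnAut_commute (m : ℕ) (j k : Fin m) : Commute (gnAut m j) (gnAut m k) := by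
  rcases lt_trichotomy (j : ℕ) (k : ℕ) with h | h | h
  · apply MulEquiv.ext; intro x
    show gnAut m j (gnAut m k x) = gnAut m k (gnAut m j x)
    simp only [gnAut_apply]
    exact DFunLike.congr_fun (gnA_comp_comm m j k h) x
  · have : j = k := Fin.ext h
    rw [this]
  · apply MulEquiv.ext; intro x
    show gnAut m j (gnAut m k x) = gnAut m k (gnAut m j x)
    simp only [gnAut_apply]
    exact (DFunLike.congr_fun (gnA_comp_comm m k j h) x).symm

abbrev GnQ (m : ℕ) := Multiplicative (Fin m → ℤ)

/-- `e_j`: the `j`-th standard generator of `ℤ^m`. -/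
def gnE (m : ℕ) (j : Fin m) : GnQ m := Multiplicative.ofAdd (Pi.single j 1)

/-- The action of `ℤ^m` on the free group. -/
def gnPhi (m : ℕ) : GnQ m →* MulAut (GnF m) :=
  (MonoidHom.noncommPiCoprod (fun j => zpowersHom _ (gnAut m j))
      (fun j k hjk x y => Commute.zpow_zpow (gnAut_commute m j k) _ _)).comp
    (MulEquiv.funMultiplicative (Fin m) ℤ).toMonoidHom

theorem funMultiplicative_gnE (m : ℕ) (j : Fin m) :
    (MulEquiv.funMultiplicative (Fin m) ℤ) (gnE m j) =
      Pi.mulSingle j (Multiplicative.ofAdd 1) := by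
  funext i
  by_cases h : i = j
  · subst h; simp [gnE, MulEquiv.funMultiplicative]
  · simp [gnE, MulEquiv.funMultiplicative, Pi.single, Pi.mulSingle, Function.update,
      h]

theorem gnPhi_gnE (m : ℕ) (j : Fin m) : gnPhi m (gnE m j) = gnAut m j := by
  rw [gnPhi, MonoidHom.comp_apply, MulEquiv.coe_toMonoidHom, funMultiplicative_gnE]
  refine (MonoidHom.noncommPiCoprod_mulSingle ..).trans ?_
  rfl

theorem gnQ_closure_gnE (m : ℕ) :
    Subgroup.closure (Set.range (gnE m)) = (⊤ : Subgroup (GnQ m)) := by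
  rw [eq_top_iff]
  intro q _
  have hq : q = ∏ j : Fin m, gnE m j ^ (q.toAdd j) := by
    have : q = Multiplicative.ofAdd (∑ j : Fin m, Pi.single j (q.toAdd j)) := by
      rw [Finset.univ_sum_single]; rfl
    conv_lhs => rw [this]
    rw [ofAdd_sum]
    refine Finset.prod_congr rfl fun j _ => ?_
    rw [gnE, ← ofAdd_zsmul]
    congr 1
    rw [← Pi.single_smul, smul_eq_mul, mul_one]
  rw [hq]
  exact Subgroup.prod_mem _ fun j _ =>
    Subgroup.zpow_mem _ (Subgroup.subset_closure (Set.mem_range_self j)) _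

open SemidirectProduct in
abbrev GnK (m : ℕ) := SemidirectProduct (GnF m) (GnQ m) (gnPhi m)

def gnF (m : ℕ) : Fin (m + 1) ⊕ Fin m → GnK m :=
  Sum.elim (fun i => SemidirectProduct.inl (FreeGroup.of i))
    (fun j => SemidirectProduct.inr (gnE m j))

theorem gn_inl_mul_inr (m : ℕ) (n : GnF m) (q : GnQ m) :
    (SemidirectProduct.inl n : GnK m) * SemidirectProduct.inr q =
      SemidirectProduct.inr q * SemidirectProduct.inl ((gnPhi m q)⁻¹ n) := by
  have h := SemidirectProduct.inl_aut (φ := gnPhi m) q ((gnPhi m q)⁻¹ n)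
  rw [MulAut.apply_inv_self] at h
  rw [h, mul_assoc, mul_assoc, ← MonoidHom.map_mul, inv_mul_cancel, MonoidHom.map_one, mul_one]

theorem gn_lift_P (m : ℕ) (i : Fin (m + 1)) :
    FreeGroup.lift (gnF m) (gnFreeP m i) = SemidirectProduct.inl (FreeGroup.of i) :=
  FreeGroup.lift_apply_of

theorem gn_lift_Y (m : ℕ) (j : Fin m) :
    FreeGroup.lift (gnF m) (gnFreeY m j) = SemidirectProduct.inr (gnE m j) :=
  FreeGroup.lift_apply_of

theorem gn_rels_hold (m : ℕ) : ∀ r ∈ gnRels m, FreeGroup.lift (gnF m) r = 1 := by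
  intro r hr
  rcases hr with ⟨i, j, rfl⟩ | ⟨i, j, hij, rfl⟩ | ⟨i, j, hij, rfl⟩
  · rw [map_commutatorElement, commutatorElement_eq_one_iff_commute, gn_lift_Y, gn_lift_Y]
    exact (Commute.all _ _).map SemidirectProduct.inr
  · rw [map_commutatorElement, commutatorElement_eq_one_iff_commute, gn_lift_P, gn_lift_Y,
      commute_iff_eq, gn_inl_mul_inr, gnPhi_gnE]
    congr 2
    rw [gnAut_inv_apply, gnB_of_le m j i hij]
  · rw [map_commutatorElement, commutatorElement_eq_one_iff_commute]
    have h2 : (FreeGroup.lift (gnF m))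
        (gnFreeY m j * gnFreeP m j.castSucc * (gnFreeP m j.succ)⁻¹) =
        SemidirectProduct.inr (gnE m j) *
          SemidirectProduct.inl (FreeGroup.of j.castSucc * (FreeGroup.of j.succ)⁻¹) := by
      rw [MonoidHom.map_mul, MonoidHom.map_mul, MonoidHom.map_inv, gn_lift_P, gn_lift_P,
        gn_lift_Y, mul_assoc, ← MonoidHom.map_inv, ← MonoidHom.map_mul]
    rw [gn_lift_P, h2, commute_iff_eq, ← mul_assoc, gn_inl_mul_inr, gnPhi_gnE, mul_assoc,
      mul_assoc, ← MonoidHom.map_mul, ← MonoidHom.map_mul]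
    congr 2
    rw [gnAut_inv_apply, gnB_of_lt m j i (by exact hij), gnC]
    group

/-- The homomorphism `G_n → F ⋊ ℤ^{n-1}`. -/
def gnTheta (m : ℕ) : GnGroup m →* GnK m := PresentedGroup.toGroup (gn_rels_hold m)

theorem gnTheta_P (m : ℕ) (i : Fin (m + 1)) :
    gnTheta m (gnP m i) = SemidirectProduct.inl (FreeGroup.of i) :=
  PresentedGroup.toGroup.of (gn_rels_hold m)

theorem gnTheta_Y (m : ℕ) (j : Fin m) :
    gnTheta m (gnY m j) = SemidirectProduct.inr (gnE m j) :=
  PresentedGroup.toGroup.of (gn_rels_hold m)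

theorem gn_rel_one (m : ℕ) {r : FreeGroup (Fin (m + 1) ⊕ Fin m)} (hr : r ∈ gnRels m) :
    PresentedGroup.mk (gnRels m) r = 1 :=
  (QuotientGroup.eq_one_iff r).2 (Subgroup.subset_normalClosure hr)

theorem gnY_comm (m : ℕ) (i j : Fin m) : Commute (gnY m i) (gnY m j) := by
  have := gn_rel_one m (Or.inl ⟨i, j, rfl⟩)
  rw [map_commutatorElement, commutatorElement_eq_one_iff_commute] at this
  exact this

theorem gnPY_comm (m : ℕ) (i : Fin (m + 1)) (j : Fin m) (h : (i : ℕ) ≤ (j : ℕ)) :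
    Commute (gnP m i) (gnY m j) := by
  have := gn_rel_one m (Or.inr (Or.inl ⟨i, j, h, rfl⟩))
  rw [map_commutatorElement, commutatorElement_eq_one_iff_commute] at this
  exact this

theorem gnPU_comm (m : ℕ) (i : Fin (m + 1)) (j : Fin m) (h : (j : ℕ) < (i : ℕ)) :
    Commute (gnP m i) (gnY m j * gnP m j.castSucc * (gnP m j.succ)⁻¹) := by
  have := gn_rel_one m (Or.inr (Or.inr ⟨i, j, h, rfl⟩))
  rw [map_commutatorElement, commutatorElement_eq_one_iff_commute] at this
  exact this

/-- Conjunct 7: `y_j⁻¹ p_i y_j = p_i` for `i ≤ j`. -/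
theorem gn_conj_le (m : ℕ) (i : Fin (m + 1)) (j : Fin m) (h : (i : ℕ) ≤ (j : ℕ)) :
    (gnY m j)⁻¹ * gnP m i * gnY m j = gnP m i := by
  have hc := (gnPY_comm m i j h).eq
  calc (gnY m j)⁻¹ * gnP m i * gnY m j
      = (gnY m j)⁻¹ * (gnP m i * gnY m j) := by group
    _ = (gnY m j)⁻¹ * (gnY m j * gnP m i) := by rw [hc]
    _ = gnP m i := by group

/-- Conjunct 6: `y_j⁻¹ p_i y_j = (p_{j+1} p_j⁻¹)⁻¹ p_i (p_{j+1} p_j⁻¹)` for `j < i`. -/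
theorem gn_conj_lt (m : ℕ) (i : Fin (m + 1)) (j : Fin m) (h : (j : ℕ) < (i : ℕ)) :
    (gnY m j)⁻¹ * gnP m i * gnY m j =
      (gnP m j.succ * (gnP m j.castSucc)⁻¹)⁻¹ * gnP m i *
        (gnP m j.succ * (gnP m j.castSucc)⁻¹) := by
  have hc := (gnPU_comm m i j h).eq
  set y := gnY m j
  set a := gnP m j.castSucc
  set b := gnP m j.succ
  set p := gnP m i
  calc y⁻¹ * p * y
      = y⁻¹ * (p * (y * a * b⁻¹)) * (b * a⁻¹) := by group
    _ = y⁻¹ * (y * a * b⁻¹ * p) * (b * a⁻¹) := by rw [hc]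
    _ = (b * a⁻¹)⁻¹ * p * (b * a⁻¹) := by group

def gnFP (m : ℕ) : GnF m →* GnGroup m := FreeGroup.lift (gnP m)

theorem gnFP_of (m : ℕ) (i : Fin (m + 1)) : gnFP m (FreeGroup.of i) = gnP m i :=
  FreeGroup.lift_apply_of

def gnFQ (m : ℕ) : GnQ m →* GnGroup m :=
  (MonoidHom.noncommPiCoprod (fun j => zpowersHom _ (gnY m j))
      (fun j k _ => fun x y => Commute.zpow_zpow (gnY_comm m j k) _ _)).comp
    (MulEquiv.funMultiplicative (Fin m) ℤ).toMonoidHom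

theorem gnFQ_gnE (m : ℕ) (j : Fin m) : gnFQ m (gnE m j) = gnY m j := by
  rw [gnFQ, MonoidHom.comp_apply, MulEquiv.coe_toMonoidHom, funMultiplicative_gnE]
  refine (MonoidHom.noncommPiCoprod_mulSingle ..).trans ?_
  rfl

def gnCond (m : ℕ) : Subgroup (GnQ m) where
  carrier := { q | ∀ x, gnFP m (gnPhi m q x) = gnFQ m q * gnFP m x * (gnFQ m q)⁻¹ }
  one_mem' := by intro x; simp
  mul_mem' := by
    intro a b ha hb x
    have h1 : gnPhi m (a * b) x = gnPhi m a (gnPhi m b x) := by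
      rw [_root_.map_mul]; rfl
    rw [h1, ha, hb, _root_.map_mul]
    group
  inv_mem' := by
    intro a ha x
    have h1 := ha ((gnPhi m a)⁻¹ x)
    rw [MulAut.apply_inv_self] at h1
    rw [_root_.map_inv (gnPhi m) a, _root_.map_inv (gnFQ m) a, h1]
    group

theorem gnE_inv_mem_cond (m : ℕ) (j : Fin m) : (gnE m j)⁻¹ ∈ gnCond m := by
  intro x
  have hphi : gnPhi m ((gnE m j)⁻¹) x = gnB m j x := by
    rw [_root_.map_inv, gnPhi_gnE]; exact gnAut_inv_apply m j x
  have hq : gnFQ m ((gnE m j)⁻¹) = (gnY m j)⁻¹ := by rw [_root_.map_inv, gnFQ_gnE]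
  rw [hphi, hq, inv_inv]
  have key : (gnFP m).comp (gnB m j) =
      (MulAut.conj (gnY m j)⁻¹).toMonoidHom.comp (gnFP m) := by
    apply FreeGroup.ext_hom
    intro i
    simp only [MonoidHom.comp_apply, MulAut.conj_apply, MulEquiv.coe_toMonoidHom, gnFP_of]
    by_cases h : (j : ℕ) < (i : ℕ)
    · rw [gnB_of_lt m j i h, gnC, MonoidHom.map_mul, MonoidHom.map_mul, MonoidHom.map_inv,
        MonoidHom.map_mul, MonoidHom.map_inv, gnFP_of, gnFP_of, gnFP_of]
      have := gn_conj_lt m i j h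
      calc gnP m j.castSucc * (gnP m j.succ)⁻¹⁻¹⁻¹ * gnP m i * (gnP m j.succ * (gnP m j.castSucc)⁻¹)
          = (gnP m j.succ * (gnP m j.castSucc)⁻¹)⁻¹ * gnP m i *
              (gnP m j.succ * (gnP m j.castSucc)⁻¹) := by group
        _ = (gnY m j)⁻¹ * gnP m i * gnY m j := (gn_conj_lt m i j h).symm
        _ = (gnY m j)⁻¹ * gnP m i * ((gnY m j)⁻¹)⁻¹ := by rw [inv_inv]
    · rw [gnB_of_le m j i (by omega)]
      have := gn_conj_le m i j (by omega)
      rw [gnFP_of]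
      calc gnP m i = (gnY m j)⁻¹ * gnP m i * gnY m j := (gn_conj_le m i j (by omega)).symm
        _ = (gnY m j)⁻¹ * gnP m i * ((gnY m j)⁻¹)⁻¹ := by rw [inv_inv]
  exact DFunLike.congr_fun key x

theorem gnCond_eq_top (m : ℕ) : gnCond m = ⊤ := by
  rw [eq_top_iff, ← gnQ_closure_gnE]
  rw [Subgroup.closure_le]
  rintro q ⟨j, rfl⟩
  have := (gnCond m).inv_mem (gnE_inv_mem_cond m j)
  simpa using this

theorem gn_lift_cond (m : ℕ) :
    ∀ q, (gnFP m).comp ((gnPhi m q).toMonoidHom) =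
      (MulAut.conj (gnFQ m q)).toMonoidHom.comp (gnFP m) := by
  intro q
  ext x
  have hq : q ∈ gnCond m := by rw [gnCond_eq_top m]; trivial
  simpa using hq (FreeGroup.of x)

/-- The homomorphism `F ⋊ ℤ^{n-1} → G_n`. -/
def gnPsi (m : ℕ) : GnK m →* GnGroup m :=
  SemidirectProduct.lift (gnFP m) (gnFQ m) (gn_lift_cond m)

theorem gnPsi_comp_gnTheta (m : ℕ) :
    (gnPsi m).comp (gnTheta m) = MonoidHom.id (GnGroup m) := by
  apply PresentedGroup.ext
  rintro (i | j)
  · show gnPsi m (gnTheta m (gnP m i)) = gnP m i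
    rw [gnTheta_P, gnPsi, SemidirectProduct.lift_inl, gnFP_of]
  · show gnPsi m (gnTheta m (gnY m j)) = gnY m j
    rw [gnTheta_Y, gnPsi, SemidirectProduct.lift_inr, gnFQ_gnE]

theorem gnTheta_leftInverse (m : ℕ) : ∀ x, gnPsi m (gnTheta m x) = x := fun x =>
  DFunLike.congr_fun (gnPsi_comp_gnTheta m) x

theorem gnTheta_injective (m : ℕ) : Function.Injective (gnTheta m) :=
  Function.LeftInverse.injective (gnTheta_leftInverse m)

theorem gnN_map (m : ℕ) :
    (Subgroup.closure (Set.range (gnP m))).map (gnTheta m) =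
      (SemidirectProduct.inl : GnF m →* GnK m).range := by
  rw [MonoidHom.map_closure, MonoidHom.range_eq_map, ← FreeGroup.closure_range_of (Fin (m + 1)),
    MonoidHom.map_closure, ← Set.range_comp, ← Set.range_comp]
  congr 1
  apply congrArg
  funext i
  exact gnTheta_P m i

theorem gnQsub_map (m : ℕ) :
    (Subgroup.closure (Set.range (gnY m))).map (gnTheta m) =
      (SemidirectProduct.inr : GnQ m →* GnK m).range := by
  rw [MonoidHom.map_closure, MonoidHom.range_eq_map, ← gnQ_closure_gnE m,
    MonoidHom.map_closure, ← Set.range_comp, ← Set.range_comp]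
  congr 1
  apply congrArg
  funext j
  exact gnTheta_Y m j

theorem gnN_eq_ker (m : ℕ) :
    Subgroup.closure (Set.range (gnP m)) =
      (SemidirectProduct.rightHom.comp (gnTheta m)).ker := by
  apply le_antisymm
  · rw [Subgroup.closure_le]
    rintro _ ⟨i, rfl⟩
    show gnP m i ∈ (SemidirectProduct.rightHom.comp (gnTheta m)).ker
    rw [MonoidHom.mem_ker, MonoidHom.comp_apply, gnTheta_P, SemidirectProduct.rightHom_inl]
  · intro g hg
    rw [MonoidHom.mem_ker, MonoidHom.comp_apply] at hg
    have hrange : gnTheta m g ∈ (SemidirectProduct.inl : GnF m →* GnK m).range := by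
      rw [SemidirectProduct.range_inl_eq_ker_rightHom, MonoidHom.mem_ker]; exact hg
    obtain ⟨w, hw⟩ := hrange
    have hgw : g = gnFP m w := by
      rw [← gnTheta_leftInverse m g, ← hw, gnPsi, SemidirectProduct.lift_inl]
    rw [hgw]
    have : gnFP m w ∈ (gnFP m).range := ⟨w, rfl⟩
    rwa [gnFP, FreeGroup.range_lift_eq_closure] at this

/-- In `G_n` (`n = m+1`): the subgroup `N = ⟨p_1,…,p_n⟩` is normal and free of rank
`n`, `Q = ⟨y_1,…,y_{n-1}⟩` is free abelian of rank `n-1`, `G_n = N ⋊ Q`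
(internally: `N ⊓ Q = ⊥`, `N ⊔ Q = ⊤`), and the conjugation action is
`p_i^{y_j} = p_i^{p_{j+1} p_j⁻¹}` for `j < i` and `p_i^{y_j} = p_i` for `j ≥ i`. -/
theorem gn_semidirect_structure (m : ℕ) :
    (Subgroup.closure (Set.range (gnP m))).Normal ∧
    Nonempty (Subgroup.closure (Set.range (gnP m)) ≃* FreeGroup (Fin (m + 1))) ∧
    Nonempty (Subgroup.closure (Set.range (gnY m)) ≃* Multiplicative (Fin m → ℤ)) ∧
    Subgroup.closure (Set.range (gnP m)) ⊓ Subgroup.closure (Set.range (gnY m)) = ⊥ ∧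
    Subgroup.closure (Set.range (gnP m)) ⊔ Subgroup.closure (Set.range (gnY m)) = ⊤ ∧
    (∀ (i : Fin (m + 1)) (j : Fin m), (j : ℕ) < (i : ℕ) →
      (gnY m j)⁻¹ * gnP m i * gnY m j =
        (gnP m j.succ * (gnP m j.castSucc)⁻¹)⁻¹ * gnP m i *
          (gnP m j.succ * (gnP m j.castSucc)⁻¹)) ∧
    (∀ (i : Fin (m + 1)) (j : Fin m), (i : ℕ) ≤ (j : ℕ) →
      (gnY m j)⁻¹ * gnP m i * gnY m j = gnP m i) := by
  refine ⟨?_, ?_, ?_, ?_, ?_, fun i j h => gn_conj_lt m i j h, fun i j h => gn_conj_le m i j h⟩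
  · rw [gnN_eq_ker m]
    exact MonoidHom.normal_ker _
  · exact ⟨((Subgroup.equivMapOfInjective _ (gnTheta m) (gnTheta_injective m)).trans
      (MulEquiv.subgroupCongr (gnN_map m))).trans
      (MonoidHom.ofInjective SemidirectProduct.inl_injective).symm⟩
  · exact ⟨((Subgroup.equivMapOfInjective _ (gnTheta m) (gnTheta_injective m)).trans
      (MulEquiv.subgroupCongr (gnQsub_map m))).trans
      (MonoidHom.ofInjective SemidirectProduct.inr_injective).symm⟩
  · rw [eq_bot_iff]
    intro x hx
    rw [Subgroup.mem_inf] at hx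
    have h1 : gnTheta m x ∈ (SemidirectProduct.inl : GnF m →* GnK m).range := by
      rw [← gnN_map m]; exact Subgroup.mem_map_of_mem _ hx.1
    have h2 : gnTheta m x ∈ (SemidirectProduct.inr : GnQ m →* GnK m).range := by
      rw [← gnQsub_map m]; exact Subgroup.mem_map_of_mem _ hx.2
    obtain ⟨w, hw⟩ := h1
    obtain ⟨q, hq⟩ := h2
    have hq1 : q = 1 := by
      have := congrArg SemidirectProduct.rightHom (hq.trans hw.symm)
      rwa [SemidirectProduct.rightHom_inr, SemidirectProduct.rightHom_inl] at this
    have : gnTheta m x = 1 := by rw [← hq, hq1, MonoidHom.map_one]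
    rw [Subgroup.mem_bot]
    apply gnTheta_injective m
    rw [this, MonoidHom.map_one]
  · have hof : (PresentedGroup.of : Fin (m + 1) ⊕ Fin m → GnGroup m) =
        Sum.elim (gnP m) (gnY m) := by
      funext x; cases x <;> rfl
    rw [← Subgroup.closure_union, ← Set.Sum.elim_range, ← hof,
      PresentedGroup.closure_range_of]
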